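/- Let a > 1 and define F : ℝ⁴ → ℝ⁴ by F(x,y,pₓ,p_y) = (pₓ, p_y, −2x + a·((x+1)/√((x+1)²+y²) + (x−1)/√((x−1)²+y²)), −2y + a·y·(1/√((x+1)²+y²) + 1/√((x−1)²+y²))). Then for every point (x,y,pₓ,p_y) with (x,y) ∉ {(1,0),(−1,0)}, one has F(x,y,pₓ,p_y) = 0 if and only if (x,y,pₓ,p_y) is one of the five points (0,0,0,0), (0,√(a²−1),0,0), (0,−√(a²−1),0,0), (a,0,0,0), (−a,0,0,0). -/

import Mathlib

set_option maxHeartbeats 1000000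


/-- For `a > 1`, the equilibrium points of the planar two-center problem
with harmonic-like interactions are exactly the five points
`(0,0,0,0)`, `(0, ±√(a²−1), 0, 0)`, `(±a, 0, 0, 0)`. -/
theorem equilibria_of_two_center_a_gt_one (a : ℝ) (ha : 1 < a)
    (F : ℝ → ℝ → ℝ → ℝ → ℝ × ℝ × ℝ × ℝ)
    (hF : ∀ x y px py, F x y px py =
      (px, py,
        -2 * x + a * ((x + 1) / Real.sqrt ((x + 1) ^ 2 + y ^ 2) +
          (x - 1) / Real.sqrt ((x - 1) ^ 2 + y ^ 2)),
        -2 * y + a * y * (1 / Real.sqrt ((x + 1) ^ 2 + y ^ 2) +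
          1 / Real.sqrt ((x - 1) ^ 2 + y ^ 2))))
    (x y px py : ℝ)
    (h1 : (x, y) ≠ ((1 : ℝ), (0 : ℝ)))
    (h2 : (x, y) ≠ ((-1 : ℝ), (0 : ℝ))) :
    F x y px py = (0, 0, 0, 0) ↔
      ((x, y, px, py) = ((0 : ℝ), (0 : ℝ), (0 : ℝ), (0 : ℝ)) ∨
       (x, y, px, py) = ((0 : ℝ), Real.sqrt (a ^ 2 - 1), (0 : ℝ), (0 : ℝ)) ∨
       (x, y, px, py) = ((0 : ℝ), -Real.sqrt (a ^ 2 - 1), (0 : ℝ), (0 : ℝ)) ∨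
       (x, y, px, py) = (a, (0 : ℝ), (0 : ℝ), (0 : ℝ)) ∨
       (x, y, px, py) = (-a, (0 : ℝ), (0 : ℝ), (0 : ℝ))) := by
  have ha0 : (0:ℝ) < a := lt_trans one_pos ha
  have ha2 : (0:ℝ) ≤ a ^ 2 - 1 := by nlinarith
  have hs2 : Real.sqrt (a ^ 2 - 1) ^ 2 = a ^ 2 - 1 := Real.sq_sqrt ha2
  rw [hF]
  simp only [Prod.mk.injEq]
  constructor
  · rintro ⟨hpx, hpy, h3, h4⟩
    rcases eq_or_ne y 0 with hy | hy
    · -- y = 0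
      subst hy
      have hx1 : x ≠ 1 := by rintro rfl; exact h1 rfl
      have hx2 : x ≠ -1 := by rintro rfl; exact h2 rfl
      have e1 : Real.sqrt ((x + 1) ^ 2 + 0 ^ 2) = |x + 1| := by
        rw [show (x+1)^2 + 0^2 = (x+1)^2 by ring, Real.sqrt_sq_eq_abs]
      have e2 : Real.sqrt ((x - 1) ^ 2 + 0 ^ 2) = |x - 1| := by
        rw [show (x-1)^2 + 0^2 = (x-1)^2 by ring, Real.sqrt_sq_eq_abs]
      rw [e1, e2] at h3
      by_cases hgt : 1 < x
      · have a1 : |x + 1| = x + 1 := abs_of_pos (by linarith)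
        have a2 : |x - 1| = x - 1 := abs_of_pos (by linarith)
        rw [a1, a2] at h3
        have d1 : (x + 1) / (x + 1) = 1 := div_self (by linarith)
        have d2 : (x - 1) / (x - 1) = 1 := div_self (by linarith)
        rw [d1, d2] at h3
        have hxa : x = a := by linarith
        exact Or.inr (Or.inr (Or.inr (Or.inl ⟨hxa, rfl, hpx, hpy⟩)))
      · by_cases hlt : x < -1
        · have a1 : |x + 1| = -(x + 1) := abs_of_neg (by linarith)
          have a2 : |x - 1| = -(x - 1) := abs_of_neg (by linarith)
          rw [a1, a2] at h3
          have d1 : (x + 1) / -(x + 1) = -1 := by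
            rw [div_neg, div_self (by linarith : x + 1 ≠ 0)]
          have d2 : (x - 1) / -(x - 1) = -1 := by
            rw [div_neg, div_self (by linarith : x - 1 ≠ 0)]
          rw [d1, d2] at h3
          have hxa : x = -a := by linarith
          exact Or.inr (Or.inr (Or.inr (Or.inr ⟨hxa, rfl, hpx, hpy⟩)))
        · push_neg at hgt hlt
          have hxgt : -1 < x := lt_of_le_of_ne hlt (Ne.symm hx2)
          have hxlt : x < 1 := lt_of_le_of_ne hgt hx1
          have a1 : |x + 1| = x + 1 := abs_of_pos (by linarith)
          have a2 : |x - 1| = -(x - 1) := abs_of_neg (by linarith)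
          rw [a1, a2] at h3
          have d1 : (x + 1) / (x + 1) = 1 := div_self (by linarith)
          have d2 : (x - 1) / -(x - 1) = -1 := by
            rw [div_neg, div_self (by linarith : x - 1 ≠ 0)]
          rw [d1, d2] at h3
          have hx0 : x = 0 := by
            have : a * (1 + -1) = a * 0 := by ring
            nlinarith [h3]
          exact Or.inl ⟨hx0, rfl, hpx, hpy⟩
    · -- y ≠ 0
      have hp1 : (0:ℝ) < (x + 1) ^ 2 + y ^ 2 := by positivity
      have hp2 : (0:ℝ) < (x - 1) ^ 2 + y ^ 2 := by positivity
      set r1 := Real.sqrt ((x + 1) ^ 2 + y ^ 2) with hr1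
      set r2 := Real.sqrt ((x - 1) ^ 2 + y ^ 2) with hr2
      have hr1p : 0 < r1 := Real.sqrt_pos.2 hp1
      have hr2p : 0 < r2 := Real.sqrt_pos.2 hp2
      have hS : a * (1 / r1 + 1 / r2) = 2 := by
        have h5 : y * (a * (1 / r1 + 1 / r2)) = y * 2 := by
          have : a * y * (1 / r1 + 1 / r2) = 2 * y := by linarith
          linarith [this]
        exact mul_left_cancel₀ hy h5
      have key : a / r1 - a / r2 = 0 := by
        linear_combination h3 - x * hS
      have hr12 : r1 = r2 := by
        have h6 : a * r2 = a * r1 := by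
          field_simp at key
          linarith [key]
        exact (mul_left_cancel₀ (ne_of_gt ha0) h6).symm
      have hsq : (x + 1) ^ 2 + y ^ 2 = (x - 1) ^ 2 + y ^ 2 := by
        rw [← Real.sq_sqrt hp1.le, ← Real.sq_sqrt hp2.le, ← hr1, ← hr2, hr12]
      have hx0 : x = 0 := by nlinarith [hsq]
      subst hx0
      have harg : ((0:ℝ) + 1) ^ 2 + y ^ 2 = 1 + y ^ 2 := by ring
      have harg2 : ((0:ℝ) - 1) ^ 2 + y ^ 2 = 1 + y ^ 2 := by ring
      have hr1e : r1 = Real.sqrt (1 + y ^ 2) := by rw [hr1, harg]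
      have hta : Real.sqrt (1 + y ^ 2) = a := by
        have ht : 0 < Real.sqrt (1 + y ^ 2) := by rw [← hr1e]; exact hr1p
        have hr2e : r2 = Real.sqrt (1 + y ^ 2) := by rw [hr2, harg2]
        rw [hr1e, hr2e] at hS
        field_simp at hS
        linarith
      have h1y : 1 + y ^ 2 = a ^ 2 := by
        have := Real.sq_sqrt (by positivity : (0:ℝ) ≤ 1 + y ^ 2)
        rw [hta] at this
        linarith
      have hy2 : y ^ 2 = Real.sqrt (a ^ 2 - 1) ^ 2 := by rw [hs2]; linarith
      have hfac : (y - Real.sqrt (a ^ 2 - 1)) * (y + Real.sqrt (a ^ 2 - 1)) = 0 := by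
        linear_combination hy2
      rcases mul_eq_zero.1 hfac with hc | hc
      · exact Or.inr (Or.inl ⟨rfl, by linarith, hpx, hpy⟩)
      · exact Or.inr (Or.inr (Or.inl ⟨rfl, by linarith, hpx, hpy⟩))
  · have hsa : Real.sqrt (1 + Real.sqrt (a ^ 2 - 1) ^ 2) = a := by
      rw [hs2, show 1 + (a ^ 2 - 1) = a ^ 2 by ring, Real.sqrt_sq ha0.le]
    rintro (⟨rfl, rfl, rfl, rfl⟩ | ⟨rfl, rfl, rfl, rfl⟩ | ⟨rfl, rfl, rfl, rfl⟩ |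
      h | h)
    · refine ⟨rfl, rfl, ?_, by ring⟩
      norm_num
    · refine ⟨rfl, rfl, ?_, ?_⟩
      · rw [show ((0:ℝ) + 1) ^ 2 + Real.sqrt (a ^ 2 - 1) ^ 2
            = 1 + Real.sqrt (a ^ 2 - 1) ^ 2 by ring,
          show ((0:ℝ) - 1) ^ 2 + Real.sqrt (a ^ 2 - 1) ^ 2
            = 1 + Real.sqrt (a ^ 2 - 1) ^ 2 by ring, hsa]
        field_simp
        ring
      · rw [show ((0:ℝ) + 1) ^ 2 + Real.sqrt (a ^ 2 - 1) ^ 2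
            = 1 + Real.sqrt (a ^ 2 - 1) ^ 2 by ring,
          show ((0:ℝ) - 1) ^ 2 + Real.sqrt (a ^ 2 - 1) ^ 2
            = 1 + Real.sqrt (a ^ 2 - 1) ^ 2 by ring, hsa]
        field_simp
        ring
    · refine ⟨rfl, rfl, ?_, ?_⟩
      · rw [show ((0:ℝ) + 1) ^ 2 + (-Real.sqrt (a ^ 2 - 1)) ^ 2
            = 1 + Real.sqrt (a ^ 2 - 1) ^ 2 by ring,
          show ((0:ℝ) - 1) ^ 2 + (-Real.sqrt (a ^ 2 - 1)) ^ 2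
            = 1 + Real.sqrt (a ^ 2 - 1) ^ 2 by ring, hsa]
        field_simp
        ring
      · rw [show ((0:ℝ) + 1) ^ 2 + (-Real.sqrt (a ^ 2 - 1)) ^ 2
            = 1 + Real.sqrt (a ^ 2 - 1) ^ 2 by ring,
          show ((0:ℝ) - 1) ^ 2 + (-Real.sqrt (a ^ 2 - 1)) ^ 2
            = 1 + Real.sqrt (a ^ 2 - 1) ^ 2 by ring, hsa]
        field_simp
        ring
    · obtain ⟨hx, rfl, rfl, rfl⟩ := h
      refine ⟨rfl, rfl, ?_, by ring⟩
      rw [hx]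
      rw [show (a + 1) ^ 2 + (0:ℝ) ^ 2 = (a + 1) ^ 2 by ring,
        show (a - 1) ^ 2 + (0:ℝ) ^ 2 = (a - 1) ^ 2 by ring,
        Real.sqrt_sq (by linarith : (0:ℝ) ≤ a + 1),
        Real.sqrt_sq (by linarith : (0:ℝ) ≤ a - 1),
        div_self (by linarith : a + 1 ≠ 0), div_self (by linarith : a - 1 ≠ 0)]
      ring
    · obtain ⟨hx, rfl, rfl, rfl⟩ := h
      refine ⟨rfl, rfl, ?_, by ring⟩
      rw [hx]
      rw [show (-a + 1) ^ 2 + (0:ℝ) ^ 2 = (a - 1) ^ 2 by ring,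
        show (-a - 1) ^ 2 + (0:ℝ) ^ 2 = (a + 1) ^ 2 by ring,
        Real.sqrt_sq (by linarith : (0:ℝ) ≤ a - 1),
        Real.sqrt_sq (by linarith : (0:ℝ) ≤ a + 1),
        show (-a + 1) / (a - 1) = -1 by rw [show -a+1 = -(a-1) by ring, neg_div, div_self (by linarith : a - 1 ≠ 0)],
        show (-a - 1) / (a + 1) = -1 by rw [show -a-1 = -(a+1) by ring, neg_div, div_self (by linarith : a + 1 ≠ 0)]]
      ring
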